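/- For X ∈ ℝⁿˣᵈ, y ∈ ℝⁿ, ε > 0, the worst-case adversarial least-squares loss maxᵟ (1/2)Σᵢ(⟨xᵢ+δᵢ, w⟩ − yᵢ)² over perturbations δᵢ with ‖δᵢ‖ ≤ ε equals (1/2)‖Xw − y‖₂² + ε‖w‖*‖Xw − y‖₁ + (ε²n/2)‖w‖*². -/

import Mathlib

section aux

variable {d : ℕ} (p : Seminorm ℝ (Fin d → ℝ))

lemma seminorm_sum_le {ι : Type*} (t : Finset ι) (f : ι → (Fin d → ℝ)) :
    p (∑ i ∈ t, f i) ≤ ∑ i ∈ t, p (f i) := by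
  classical
  induction t using Finset.induction with
  | empty => simp
  | insert _ _ h ih =>
    rw [Finset.sum_insert h, Finset.sum_insert h]
    exact (map_add_le_add p _ _).trans (by linarith)

lemma seminorm_bound : ∃ M : ℝ, 0 ≤ M ∧ ∀ v : Fin d → ℝ, p v ≤ M * ‖v‖ := by
  refine ⟨∑ j, p ((Pi.single j (1:ℝ) : Fin d → ℝ)), Finset.sum_nonneg fun j _ => apply_nonneg _ _, fun v => ?_⟩
  have hv : v = ∑ j, v j • (Pi.single j (1:ℝ) : Fin d → ℝ) := by
    ext k; simp [Pi.single_apply, Finset.sum_ite_eq']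
  calc p v = p (∑ j, v j • (Pi.single j (1:ℝ) : Fin d → ℝ)) := by rw [← hv]
    _ ≤ ∑ j, p (v j • (Pi.single j (1:ℝ) : Fin d → ℝ)) := seminorm_sum_le p _ _
    _ = ∑ j, |v j| * p (Pi.single j 1) := by simp [map_smul_eq_mul, Real.norm_eq_abs]
    _ ≤ ∑ j, ‖v‖ * p ((Pi.single j (1:ℝ) : Fin d → ℝ)) := by
        refine Finset.sum_le_sum fun j _ => mul_le_mul_of_nonneg_right ?_ (apply_nonneg _ _)
        rw [← Real.norm_eq_abs]
        exact norm_le_pi_norm v j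
    _ = (∑ j, p ((Pi.single j (1:ℝ) : Fin d → ℝ))) * ‖v‖ := by rw [Finset.sum_mul]; exact Finset.sum_congr rfl fun j _ => mul_comm _ _

lemma seminorm_continuous : Continuous fun v => p v := by
  obtain ⟨M, hM0, hM⟩ := seminorm_bound p
  refine (LipschitzWith.of_dist_le_mul (K := ⟨M, hM0⟩) fun u v => ?_).continuous
  have h1 : p u - p v ≤ p (u - v) := by
    have : p u ≤ p (u - v) + p v := by
      calc p u = p ((u - v) + v) := by rw [sub_add_cancel]
        _ ≤ p (u - v) + p v := map_add_le_add p _ _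
    linarith
  have h2 : p v - p u ≤ p (u - v) := by
    have : p v ≤ p (u - v) + p u := by
      calc p v = p ((v - u) + u) := by rw [sub_add_cancel]
        _ ≤ p (v - u) + p u := map_add_le_add p _ _
        _ = p (u - v) + p u := by rw [← map_neg_eq_map p (v - u), neg_sub]
    linarith
  have : dist (p u) (p v) ≤ p (u - v) := by
    rw [Real.dist_eq, abs_sub_le_iff]; exact ⟨h1, h2⟩
  calc dist (p u) (p v) ≤ p (u - v) := this
    _ ≤ M * ‖u - v‖ := hM _
    _ = ↑(⟨M, hM0⟩ : NNReal) * dist u v := by rw [dist_eq_norm]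

lemma ball_compact (hp : ∀ v : Fin d → ℝ, p v = 0 → v = 0) :
    IsCompact {v : Fin d → ℝ | p v ≤ 1} := by
  -- lower bound: ∃ c > 0, c * ‖v‖ ≤ p v
  have hcont := seminorm_continuous p
  by_cases hd : ∀ v : Fin d → ℝ, v = 0
  · have : {v : Fin d → ℝ | p v ≤ 1} ⊆ {0} := fun v _ => hd v
    exact (Set.Finite.subset (Set.finite_singleton 0) this).isCompact
  push_neg at hd
  obtain ⟨v0, hv0⟩ := hd
  have hsph : IsCompact (Metric.sphere (0 : Fin d → ℝ) 1) := isCompact_sphere 0 1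
  have hne : (Metric.sphere (0 : Fin d → ℝ) 1).Nonempty := by
    refine ⟨‖v0‖⁻¹ • v0, ?_⟩
    simp [norm_smul, norm_ne_zero_iff.2 hv0, inv_mul_cancel₀ (norm_ne_zero_iff.2 hv0 : ‖v0‖ ≠ 0)]
  obtain ⟨u, hu, humin⟩ := hsph.exists_isMinOn hne hcont.continuousOn
  have hu1 : ‖u‖ = 1 := by simpa using hu
  have hc0 : 0 < p u := by
    rcases (apply_nonneg p u).lt_or_eq with h | h
    · exact h
    · exact absurd (hp u h.symm) (by intro h0; rw [h0] at hu1; simp at hu1)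
  have hlow : ∀ v : Fin d → ℝ, p u * ‖v‖ ≤ p v := by
    intro v
    rcases eq_or_ne v 0 with rfl | hv
    · simp
    · have hnv : (0:ℝ) < ‖v‖ := norm_pos_iff.2 hv
      have hmem : ‖v‖⁻¹ • v ∈ Metric.sphere (0 : Fin d → ℝ) 1 := by
        simp [norm_smul, abs_of_pos (inv_pos.2 hnv), inv_mul_cancel₀ hnv.ne']
      have := humin hmem
      have h2 : p u ≤ ‖v‖⁻¹ * p v := by
        simpa [map_smul_eq_mul, Real.norm_eq_abs, abs_of_pos (inv_pos.2 hnv)] using this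
      calc p u * ‖v‖ ≤ (‖v‖⁻¹ * p v) * ‖v‖ := by nlinarith
        _ = p v := by field_simp
  have hbdd : Bornology.IsBounded {v : Fin d → ℝ | p v ≤ 1} := by
    refine (Metric.isBounded_iff_subset_closedBall 0).2 ⟨(p u)⁻¹, fun v hv => ?_⟩
    simp only [Metric.mem_closedBall, dist_zero_right]
    have := hlow v
    rw [Set.mem_setOf_eq] at hv
    have hinv := mul_inv_cancel₀ hc0.ne'
    nlinarith [norm_nonneg v]
  have hclosed : IsClosed {v : Fin d → ℝ | p v ≤ 1} :=
    isClosed_le hcont continuous_const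
  exact Metric.isCompact_of_isClosed_isBounded hclosed hbdd

end aux

theorem stmt_15 (n d : ℕ) (p : Seminorm ℝ (Fin d → ℝ))
    (hp : ∀ v : Fin d → ℝ, p v = 0 → v = 0)
    (X : Matrix (Fin n) (Fin d) ℝ) (y : Fin n → ℝ) (w : Fin d → ℝ)
    (ε : ℝ) (hε : 0 < ε) :
    IsGreatest
      {r : ℝ | ∃ δ : Fin n → Fin d → ℝ, (∀ i, p (δ i) ≤ ε) ∧
        r = (1 / 2) * ∑ i, ((∑ j, (X i j + δ i j) * w j) - y i) ^ 2}
      ((1 / 2) * ∑ i, (X.mulVec w i - y i) ^ 2 +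
        ε * sSup {t : ℝ | ∃ δ : Fin d → ℝ, p δ ≤ 1 ∧ t = ∑ j, δ j * w j} *
          ∑ i, |X.mulVec w i - y i| +
        ε ^ 2 * n / 2 *
          sSup {t : ℝ | ∃ δ : Fin d → ℝ, p δ ≤ 1 ∧ t = ∑ j, δ j * w j} ^ 2) := by
  set S : Set ℝ := {t : ℝ | ∃ δ : Fin d → ℝ, p δ ≤ 1 ∧ t = ∑ j, δ j * w j} with hS
  set s : ℝ := sSup S with hs
  set a : Fin n → ℝ := fun i => X.mulVec w i - y i with ha
  -- S is the image of a compact set under a continuous map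
  have hSimg : S = (fun δ : Fin d → ℝ => ∑ j, δ j * w j) '' {δ | p δ ≤ 1} := by
    ext t; constructor
    · rintro ⟨δ, h1, rfl⟩; exact ⟨δ, h1, rfl⟩
    · rintro ⟨δ, h1, rfl⟩; exact ⟨δ, h1, rfl⟩
  have hScpt : IsCompact S := by
    rw [hSimg]
    exact (ball_compact p hp).image (continuous_finset_sum _ fun j _ => (continuous_apply j).mul continuous_const)
  have hSne : S.Nonempty := ⟨0, 0, by simp⟩
  have hsmem : s ∈ S := hScpt.sSup_mem hSne
  have hSbdd : BddAbove S := hScpt.bddAbove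
  have hs0 : 0 ≤ s := le_csSup hSbdd ⟨0, by simp⟩
  -- key bound: p δ ≤ ε → |∑ δ j * w j| ≤ ε * s
  have hkey : ∀ δ : Fin d → ℝ, p δ ≤ ε → |∑ j, δ j * w j| ≤ ε * s := by
    intro δ hδ
    have h1 : (∑ j, (ε⁻¹ • δ) j * w j) ≤ s := by
      refine le_csSup hSbdd ⟨ε⁻¹ • δ, ?_, rfl⟩
      rw [map_smul_eq_mul]
      simp only [Real.norm_eq_abs, abs_of_pos (inv_pos.2 hε)]
      rw [inv_mul_le_iff₀ hε]; simpa using hδ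
    have h2 : (∑ j, (-(ε⁻¹ • δ)) j * w j) ≤ s := by
      refine le_csSup hSbdd ⟨-(ε⁻¹ • δ), ?_, rfl⟩
      rw [map_neg_eq_map, map_smul_eq_mul]
      simp only [Real.norm_eq_abs, abs_of_pos (inv_pos.2 hε)]
      rw [inv_mul_le_iff₀ hε]; simpa using hδ
    have e1 : (∑ j, (ε⁻¹ • δ) j * w j) = ε⁻¹ * ∑ j, δ j * w j := by
      rw [Finset.mul_sum]; exact Finset.sum_congr rfl fun j _ => by simp [mul_assoc]
    have e2 : (∑ j, (-(ε⁻¹ • δ)) j * w j) = -(ε⁻¹ * ∑ j, δ j * w j) := by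
      rw [← e1]
      calc (∑ j, (-(ε⁻¹ • δ)) j * w j) = ∑ j, -((ε⁻¹ • δ) j * w j) :=
            Finset.sum_congr rfl fun j _ => by simp
        _ = -(∑ j, (ε⁻¹ • δ) j * w j) := by simp
    rw [e1] at h1; rw [e2] at h2
    have hinv := mul_inv_cancel₀ hε.ne'
    have hT1 : (∑ j, δ j * w j) ≤ ε * s := by
      have := mul_le_mul_of_nonneg_left h1 hε.le
      rwa [← mul_assoc, hinv, one_mul] at this
    have hT2 : -(∑ j, δ j * w j) ≤ ε * s := by
      have := mul_le_mul_of_nonneg_left h2 hε.le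
      rwa [mul_neg, ← mul_assoc, hinv, one_mul] at this
    rw [abs_le]
    exact ⟨by linarith, hT1⟩
  constructor
  · -- membership: pick the optimal δ
    obtain ⟨δ0, hδ0, hδ0s⟩ := hsmem
    refine ⟨fun i => if 0 ≤ a i then ε • δ0 else -(ε • δ0), fun i => ?_, ?_⟩
    · by_cases h : 0 ≤ a i <;> simp only [h, if_true, if_false] <;>
      · first
        | (rw [map_smul_eq_mul]
           simp only [Real.norm_eq_abs, abs_of_pos hε]
           nlinarith [apply_nonneg p δ0])
        | (rw [map_neg_eq_map, map_smul_eq_mul]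
           simp only [Real.norm_eq_abs, abs_of_pos hε]
           nlinarith [apply_nonneg p δ0])
    · have hterm : ∀ i, ((∑ j, (X i j + (if 0 ≤ a i then ε • δ0 else -(ε • δ0)) j) * w j) - y i) ^ 2
          = a i ^ 2 + 2 * (ε * s) * |a i| + (ε * s) ^ 2 := by
        intro i
        have hsplit : ∀ c : Fin d → ℝ, (∑ j, (X i j + c j) * w j)
            = X.mulVec w i + ∑ j, c j * w j := by
          intro c
          rw [Matrix.mulVec, dotProduct, ← Finset.sum_add_distrib]
          exact Finset.sum_congr rfl fun j _ => by ring
        have hsum : (∑ j, (ε • δ0) j * w j) = ε * s := by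
          rw [hδ0s, Finset.mul_sum]
          exact Finset.sum_congr rfl fun j _ => by simp [mul_assoc]
        by_cases h : 0 ≤ a i
        · simp only [h, if_true]
          rw [hsplit, hsum]
          have : X.mulVec w i + ε * s - y i = a i + ε * s := by rw [ha]; ring
          rw [this, abs_of_nonneg h]; ring
        · simp only [h, if_false]
          have hsum' : (∑ j, (-(ε • δ0)) j * w j) = -(ε * s) := by
            rw [← hsum]
            calc (∑ j, (-(ε • δ0)) j * w j) = ∑ j, -((ε • δ0) j * w j) :=
                  Finset.sum_congr rfl fun j _ => by simp
              _ = -(∑ j, (ε • δ0) j * w j) := by simp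
          rw [hsplit, hsum']
          push_neg at h
          have : X.mulVec w i + -(ε * s) - y i = a i - ε * s := by rw [ha]; ring
          rw [this, abs_of_neg h]; ring
      rw [Finset.sum_congr rfl fun i _ => hterm i]
      simp only [Finset.sum_add_distrib, Finset.sum_const, Finset.card_univ,
        Fintype.card_fin, nsmul_eq_mul, ← Finset.mul_sum]
      ring
  · -- upper bound
    rintro r ⟨δ, hδ, rfl⟩
    have hterm : ∀ i, ((∑ j, (X i j + δ i j) * w j) - y i) ^ 2
        ≤ a i ^ 2 + 2 * (ε * s) * |a i| + (ε * s) ^ 2 := by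
      intro i
      have hsplit : (∑ j, (X i j + δ i j) * w j) = X.mulVec w i + ∑ j, δ i j * w j := by
        rw [Matrix.mulVec, dotProduct, ← Finset.sum_add_distrib]
        exact Finset.sum_congr rfl fun j _ => by ring
      rw [hsplit]
      have h1 : |∑ j, δ i j * w j| ≤ ε * s := hkey _ (hδ i)
      have h2 : |X.mulVec w i + (∑ j, δ i j * w j) - y i| ≤ |a i| + ε * s := by
        calc |X.mulVec w i + (∑ j, δ i j * w j) - y i|
            = |a i + ∑ j, δ i j * w j| := by rw [ha]; ring_nf
          _ ≤ |a i| + |∑ j, δ i j * w j| := abs_add_le _ _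
          _ ≤ |a i| + ε * s := by linarith
      calc (X.mulVec w i + (∑ j, δ i j * w j) - y i) ^ 2
          = |X.mulVec w i + (∑ j, δ i j * w j) - y i| ^ 2 := (sq_abs _).symm
        _ ≤ (|a i| + ε * s) ^ 2 := by
            apply pow_le_pow_left₀ (abs_nonneg _) h2
        _ = a i ^ 2 + 2 * (ε * s) * |a i| + (ε * s) ^ 2 := by
            rw [add_sq, sq_abs]; ring
    calc (1/2) * ∑ i, ((∑ j, (X i j + δ i j) * w j) - y i) ^ 2
        ≤ (1/2) * ∑ i, (a i ^ 2 + 2 * (ε * s) * |a i| + (ε * s) ^ 2) := by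
          apply mul_le_mul_of_nonneg_left (Finset.sum_le_sum fun i _ => hterm i) (by norm_num)
      _ = (1/2) * ∑ i, a i ^ 2 + ε * s * ∑ i, |a i| + ε ^ 2 * n / 2 * s ^ 2 := by
          simp only [Finset.sum_add_distrib, Finset.sum_const, Finset.card_univ,
            Fintype.card_fin, nsmul_eq_mul, ← Finset.mul_sum]
          ring
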